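/- arXiv:2009.03676 — 8 statements merged into one kernel-verified Lean document; each statement's English description precedes it below -/
import Mathlib

section
/- A loop satisfying the Osborn identity x(yz·x) = (x^λ\y)·(zx) (where x^λ is the left inverse of x) that additionally satisfies the flexible law x(yx) = (xy)x is a Moufang loop. -/
/-- A quasigroup: a magma with left and right division. -/
class Quasigroup (Q : Type*) extends Mul Q where
  ldiv : Q → Q → Q
  rdiv : Q → Q → Q
  mul_ldiv : ∀ a b : Q, a * ldiv a b = b
  ldiv_mul : ∀ a b : Q, ldiv a (a * b) = b
  rdiv_mul : ∀ a b : Q, rdiv a b * b = a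
  mul_rdiv : ∀ a b : Q, rdiv (a * b) b = a

/-- A loop: a quasigroup with a two-sided identity. -/
class Loop (Q : Type*) extends Quasigroup Q, One Q where
  one_mul : ∀ a : Q, 1 * a = a
  mul_one : ∀ a : Q, a * 1 = a

open Quasigroup

/-- Left translation `L_a : y ↦ a·y` as a permutation. -/
def lt {Q : Type*} [Quasigroup Q] (a : Q) : Equiv.Perm Q :=
  ⟨(a * ·), ldiv a, fun b => ldiv_mul a b, fun b => mul_ldiv a b⟩

/-- Right translation `R_a : y ↦ y·a` as a permutation. -/
def rt {Q : Type*} [Quasigroup Q] (a : Q) : Equiv.Perm Q :=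
  ⟨(· * a), fun b => rdiv b a, fun b => mul_rdiv b a, fun b => rdiv_mul b a⟩

/-- The multiplication group: generated by all left and right translations. -/
def MultGroup (Q : Type*) [Quasigroup Q] : Subgroup (Equiv.Perm Q) :=
  Subgroup.closure (Set.range (lt (Q := Q)) ∪ Set.range (rt (Q := Q)))

/-- The left inverse `x^λ` (satisfying `x^λ * x = 1`). -/
def lam {Q : Type*} [Loop Q] (x : Q) : Q := rdiv 1 x

/-- The right inverse `x^ρ` (satisfying `x * x^ρ = 1`). -/
def rinv {Q : Type*} [Loop Q] (x : Q) : Q := ldiv x 1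

theorem stmt7 (Q : Type*) [Loop Q]
    (hOs : ∀ x y z : Q, x * ((y * z) * x) = Quasigroup.ldiv (lam x) y * (z * x))
    (hflex : ∀ x y : Q, x * (y * x) = (x * y) * x) :
    ∀ x y z : Q, (x * y) * (z * x) = (x * (y * z)) * x := by
  have hld : ∀ x y : Q, Quasigroup.ldiv (lam x) y = x * y := by
    intro x y
    have h := hOs x y 1
    rw [Loop.mul_one, Loop.one_mul, hflex] at h
    have := congrArg (fun t => rdiv t x) h
    simpa [mul_rdiv] using this.symm
  intro x y z
  rw [← hflex x (y * z), hOs, hld]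
end

section
/- A loop satisfying the Osborn identity x(yz·x) = (x^λ\y)·(zx) that additionally has the left inverse property x^λ(xy) = y for all x, y is a Moufang loop. -/
open Quasigroup

theorem stmt8 (Q : Type*) [Loop Q]
    (hOs : ∀ x y z : Q, x * ((y * z) * x) = Quasigroup.ldiv (lam x) y * (z * x))
    (hlip : ∀ x y : Q, lam x * (x * y) = y) :
    ∀ x y z : Q, (x * y) * (z * x) = (x * (y * z)) * x := by
  have hldiv : ∀ a b : Q, ldiv a b = lam a * b := fun a b => by
    conv_lhs => rw [← hlip a (ldiv a b), mul_ldiv]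
  have hri : ∀ x : Q, x * lam x = 1 := by
    intro x
    have h1 : x * rinv x = 1 := mul_ldiv x 1
    have h2 : lam x = rinv x := by
      have := hlip x (rinv x)
      rw [h1, Loop.mul_one] at this
      exact this
    rw [h2, h1]
  have hll : ∀ x : Q, lam (lam x) = x := by
    intro x
    have := mul_rdiv x (lam x)
    rw [hri x] at this
    exact this
  have hOs' : ∀ x y z : Q, x * ((y * z) * x) = (x * y) * (z * x) := by
    intro x y z
    rw [hOs x y z, hldiv, hll]
  have hflex : ∀ x w : Q, x * (w * x) = (x * w) * x := by
    intro x w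
    have := hOs' x w 1
    rwa [Loop.mul_one, Loop.one_mul] at this
  intro x y z
  rw [← hOs', hflex]
end

section
/- A commutative loop satisfying the Osborn identity x(yz·x) = (x^λ\y)·(zx) is a commutative Moufang loop. -/
open Quasigroup

theorem stmt9 (Q : Type*) [Loop Q]
    (hOs : ∀ x y z : Q, x * ((y * z) * x) = Quasigroup.ldiv (lam x) y * (z * x))
    (hcomm : ∀ x y : Q, x * y = y * x) :
    ∀ x y z : Q, (x * y) * (z * x) = (x * (y * z)) * x := by
  have h1 : ∀ x y : Q, Quasigroup.ldiv (lam x) y = x * y := by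
    intro x y
    have h := hOs x y 1
    rw [Loop.mul_one, Loop.one_mul] at h
    have h2 : x * (x * y) = x * Quasigroup.ldiv (lam x) y := by
      rw [hcomm x (Quasigroup.ldiv (lam x) y), ← h, hcomm y x]
    have := congrArg (Quasigroup.ldiv x) h2
    rwa [ldiv_mul, ldiv_mul, eq_comm] at this
  intro x y z
  have h := hOs x y z
  rw [h1] at h
  rw [← h, hcomm (y * z) x, hcomm (x * (y * z)) x]
end

section
/- A loop of exponent 2 (every element satisfies x·x = e) that satisfies the Osborn identity x(yz·x) = (x^λ\y)·(zx) is an abelian group. -/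
open Quasigroup

theorem stmt10 (Q : Type*) [Loop Q]
    (hOs : ∀ x y z : Q, x * ((y * z) * x) = Quasigroup.ldiv (lam x) y * (z * x))
    (hexp2 : ∀ x : Q, x * x = 1) :
    (∀ x y : Q, x * y = y * x) ∧ (∀ x y z : Q, (x * y) * z = x * (y * z)) := by
  -- lam x = x
  have hlam : ∀ x : Q, lam x = x := fun x => by
    have := Quasigroup.mul_rdiv x x
    rw [hexp2] at this
    simpa [lam] using this
  -- cancellation: a * b = 1 → b = a (since ldiv a 1 = a)
  have hldiv1 : ∀ a : Q, Quasigroup.ldiv a (1 : Q) = a := fun a => by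
    have := Quasigroup.ldiv_mul a a
    rwa [hexp2] at this
  have hcanc : ∀ a b : Q, a * b = 1 → b = a := fun a b h => by
    have := Quasigroup.ldiv_mul a b
    rw [h, hldiv1] at this
    exact this.symm
  -- ldiv x y = y * x
  have hD : ∀ x y : Q, Quasigroup.ldiv x y = y * x := fun x y => by
    have h := hOs x y y
    rw [hexp2, Loop.one_mul, hexp2, hlam] at h
    exact (hcanc _ _ h.symm).symm
  -- key identity: y * z = (y*x) * (z*x)
  have hG : ∀ x y z : Q, y * z = (y * x) * (z * x) := fun x y z => by
    have h := hOs x y z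
    rw [hlam, hD x y] at h
    rw [← h, ← hD x (y*z), Quasigroup.mul_ldiv]
  -- commutativity
  have hcomm : ∀ x y : Q, x * y = y * x := fun x y => by
    have h := hG x x y
    rwa [hexp2, Loop.one_mul] at h
  refine ⟨hcomm, fun x y z => ?_⟩
  -- (z*x)*x = z
  have hF : ∀ x z : Q, (z * x) * x = z := fun x z => by
    have h := Quasigroup.ldiv_mul x z
    rw [hD] at h
    rw [hcomm z x]
    exact h
  have h := hG y x (z * y)
  rw [hF] at h
  rw [← h, hcomm z y]
end

section
/- A loop satisfying the Osborn identity x(yz·x) = (x^λ\y)·(zx) that additionally has the cross inverse property (xy)·x^ρ = y for all x, y is a commutative Moufang loop. -/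
open Quasigroup

theorem stmt11 (Q : Type*) [Loop Q]
    (hOs : ∀ x y z : Q, x * ((y * z) * x) = Quasigroup.ldiv (lam x) y * (z * x))
    (hcip : ∀ x y : Q, (x * y) * rinv x = y) :
    (∀ x y : Q, x * y = y * x) ∧
    (∀ x y z : Q, (x * y) * (z * x) = (x * (y * z)) * x) := by
  have key : ∀ w z : Q, z * rinv w = ldiv w z := by
    intro w z
    have h := hcip w (ldiv w z)
    rwa [mul_ldiv] at h
  have hlr : ∀ x : Q, rinv (lam x) = x := by
    intro x
    have h1 : lam x * x = 1 := rdiv_mul 1 x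
    have h2 : ldiv (lam x) (lam x * x) = x := ldiv_mul _ _
    rw [h1] at h2
    exact h2
  have hOs' : ∀ x y z : Q, x * ((y * z) * x) = (y * x) * (z * x) := by
    intro x y z
    rw [hOs, ← key (lam x) y, hlr]
  have comm : ∀ x u : Q, x * u = u * x := by
    intro x u
    have h := hOs' x (rdiv u x) 1
    rwa [Loop.mul_one, rdiv_mul, Loop.one_mul] at h
  refine ⟨comm, fun x y z => ?_⟩
  calc (x*y)*(z*x) = (y*x)*(z*x) := by rw [comm x y]
    _ = x*((y*z)*x) := (hOs' x y z).symm
    _ = x*(x*(y*z)) := by rw [comm (y*z) x]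
    _ = (x*(y*z))*x := comm _ _
end

section
/- In a universal Osborn loop Q, the identity z = x·({[x\(zx)]/x · x^λ}·x) holds for all x, z ∈ Q. Equivalently, the permutation R_x L_x^{-1} R_x^{-1} R_{x^λ} R_x L_x is the identity map. -/
open Quasigroup

theorem stmt16 (Q : Type*) [Loop Q]
    (hOs : ∀ x y z : Q, x * ((y * z) * x) = Quasigroup.ldiv (lam x) y * (z * x))
    (hU : ∀ u v : Q,
      -- the u,v-principal isotope multiplication, left division and left inverse
      (fun mul' ldiv' lam' =>
        ∀ x y z : Q, mul' x (mul' (mul' y z) x) = mul' (ldiv' (lam' x) y) (mul' z x))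
      (fun a b : Q => Quasigroup.rdiv a v * Quasigroup.ldiv u b)
      (fun a b : Q => u * Quasigroup.ldiv (Quasigroup.rdiv a v) b)
      (fun a : Q => Quasigroup.rdiv (u * v) (Quasigroup.ldiv u a) * v)) :
    (∀ x z : Q,
      z = x * ((Quasigroup.rdiv (Quasigroup.ldiv x (z * x)) x * lam x) * x)) ∧
    (∀ x : Q,
      (rt x).trans ((lt x).symm.trans ((rt x).symm.trans ((rt (lam x)).trans
        ((rt x).trans (lt x))))) = Equiv.refl Q) := by

  have key : ∀ x z : Q,
      z = x * ((Quasigroup.rdiv (Quasigroup.ldiv x (z * x)) x * lam x) * x) := by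
    intro x z
    set y := Quasigroup.rdiv (Quasigroup.ldiv x (z * x)) x with hy
    have hyx : y * x = Quasigroup.ldiv x (z * x) := rdiv_mul _ _
    have h3 : x * (y * x) = z * x := by rw [hyx, mul_ldiv]
    have h1 : x * (y * x) = Quasigroup.ldiv (lam x) y * x := by
      have := hOs x y 1
      rwa [Loop.mul_one, Loop.one_mul] at this
    have hlx : lam x * x = 1 := rdiv_mul 1 x
    have h2 : x * ((y * lam x) * x) = Quasigroup.ldiv (lam x) y := by
      have := hOs x y (lam x)
      rwa [hlx, Loop.mul_one] at this
    have hc : Quasigroup.ldiv (lam x) y * x = z * x := by rw [← h1, h3]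
    have hz : Quasigroup.ldiv (lam x) y = z := by
      have := congrArg (fun t => Quasigroup.rdiv t x) hc
      simpa [mul_rdiv] using this
    rw [h2, hz]
  refine ⟨key, fun x => ?_⟩
  ext z
  simp only [Equiv.trans_apply, Equiv.refl_apply, lt, rt, Equiv.coe_fn_mk,
    Equiv.coe_fn_symm_mk]
  exact (key x z).symm
end

section
/- In a universal Osborn loop Q, the double left inverse property holds: (x^λ·(xy))·x^λ · x = y for all x, y ∈ Q; i.e., the permutation L_x L_{x^λ} R_{x^λ} R_x is the identity map. -/
open Quasigroup

theorem stmt17 (Q : Type*) [Loop Q]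
    (hOs : ∀ x y z : Q, x * ((y * z) * x) = Quasigroup.ldiv (lam x) y * (z * x))
    (hU : ∀ u v : Q,
      -- the u,v-principal isotope multiplication, left division and left inverse
      (fun mul' ldiv' lam' =>
        ∀ x y z : Q, mul' x (mul' (mul' y z) x) = mul' (ldiv' (lam' x) y) (mul' z x))
      (fun a b : Q => Quasigroup.rdiv a v * Quasigroup.ldiv u b)
      (fun a b : Q => u * Quasigroup.ldiv (Quasigroup.rdiv a v) b)
      (fun a : Q => Quasigroup.rdiv (u * v) (Quasigroup.ldiv u a) * v)) :
    (∀ x y : Q, ((lam x * (x * y)) * lam x) * x = y) ∧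
    (∀ x : Q,
      (lt x).trans ((lt (lam x)).trans ((rt (lam x)).trans (rt x))) = Equiv.refl Q) := by
  have key : ∀ x y : Q, ((lam x * (x * y)) * lam x) * x = y := by
    intro x y
    have h := hOs x (lam x * (x * y)) (lam x)
    rw [Quasigroup.ldiv_mul] at h
    have hlx : lam x * x = 1 := Quasigroup.rdiv_mul 1 x
    rw [hlx, Loop.mul_one] at h
    -- h : x * (((lam x * (x * y)) * lam x) * x) = x * y
    have h2 := congrArg (Quasigroup.ldiv x) h
    rwa [Quasigroup.ldiv_mul, Quasigroup.ldiv_mul] at h2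
  refine ⟨key, fun x => ?_⟩
  ext y
  simpa [lt, rt, Equiv.trans, mul_assoc] using key x y
end

section
/- In an Osborn loop, if the left and right inverse maps coincide (J_λ = J_ρ, i.e., x^λ = x^ρ for all x), then the loop satisfies the 3-power associative property xx·x = x·xx for all x, and conversely. -/
open Quasigroup

theorem stmt18 (Q : Type*) [Loop Q]
    (hOs : ∀ x y z : Q, x * ((y * z) * x) = Quasigroup.ldiv (lam x) y * (z * x))
    (hU : ∀ u v : Q,
      -- the u,v-principal isotope multiplication, left division and left inverse
      (fun mul' ldiv' lam' =>
        ∀ x y z : Q, mul' x (mul' (mul' y z) x) = mul' (ldiv' (lam' x) y) (mul' z x))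
      (fun a b : Q => Quasigroup.rdiv a v * Quasigroup.ldiv u b)
      (fun a b : Q => u * Quasigroup.ldiv (Quasigroup.rdiv a v) b)
      (fun a : Q => Quasigroup.rdiv (u * v) (Quasigroup.ldiv u a) * v)) :
    (∀ x : Q, lam x = rinv x) ↔ (∀ x : Q, (x * x) * x = x * (x * x)) := by
  have lcancel : ∀ a b c : Q, a * b = a * c → b = c := fun a b c h => by
    have := ldiv_mul a b; rw [h, ldiv_mul] at this; exact this.symm
  have rcancel : ∀ a b c : Q, a * c = b * c → a = b := fun a b c h => by
    have := mul_rdiv a c; rw [h, mul_rdiv] at this; exact this.symm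
  have lam_mul : ∀ x : Q, lam x * x = 1 := fun x => rdiv_mul 1 x
  have mul_rinv : ∀ x : Q, x * rinv x = 1 := fun x => mul_ldiv x 1
  have rinv_lam : ∀ x : Q, rinv (lam x) = x := fun x => by
    have h : lam x * x = 1 := lam_mul x
    calc rinv (lam x) = ldiv (lam x) 1 := rfl
      _ = ldiv (lam x) (lam x * x) := by rw [h]
      _ = x := ldiv_mul _ _
  have lam_rinv : ∀ x : Q, lam (rinv x) = x := fun x => by
    have h : x * rinv x = 1 := mul_rinv x
    calc lam (rinv x) = rdiv 1 (rinv x) := rfl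
      _ = rdiv (x * rinv x) (rinv x) := by rw [h]
      _ = x := mul_rdiv _ _
  have one_mul' : ∀ a : Q, 1 * a = a := Loop.one_mul
  have mul_one' : ∀ a : Q, a * 1 = a := Loop.mul_one
  -- KEY : x * x = (lam x) \\ (lam (lam x))
  have key : ∀ x : Q, x * x = ldiv (lam x) (lam (lam x)) := fun x => by
    have h := hOs x (lam (lam x)) (lam x)
    rw [lam_mul (lam x), one_mul', lam_mul x, mul_one'] at h
    exact h
  -- O1 : x * (x*x) = ((lam x) \\ x) * x
  have o1 : ∀ x : Q, x * (x * x) = ldiv (lam x) x * x := fun x => by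
    have h := hOs x x 1
    rw [mul_one', one_mul'] at h
    exact h
  constructor
  · intro hJ x
    have h2 : lam (lam x) = x := by rw [hJ (lam x), rinv_lam]
    have h3 : x * x = ldiv (lam x) x := by rw [key x, h2]
    rw [o1 x, ← h3]
  · intro h3 x
    have h4 : x * x = ldiv (lam x) x := by
      apply rcancel _ _ x
      rw [← o1 x, ← h3 x]
    have h5 : lam (lam x) = x := by
      have h6 := mul_ldiv (lam x) (lam (lam x))
      rw [← key x, h4, mul_ldiv] at h6
      exact h6.symm
    have h7 := rinv_lam (lam x)
    rw [h5] at h7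
    exact h7.symm
end
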